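/- Suppose within an epoch starting at iteration t_p of length E_p, the per-iteration regrets satisfy r_t ≤ 2 for all t, and for t_p + 1 ≤ t ≤ t_p + E_p − 2 we have r_t ≤ 2ν√κ₀ · min(w_t, 1) with ∑_{t=t_p}^{t_p+E_p−2} min(w_t², 1) ≤ 2 log(det V_end / det V_start) and (E_p − 1) log(det V_end / det V_start) ≤ D. Then the total epoch regret satisfies ∑_{t=t_p}^{t_p+E_p−1} r_t ≤ 4 + 2ν√(2κ₀D). -/

import Mathlib

open Finset

theorem stmt_15 (tp Ep : ℕ) (hEp : 2 ≤ Ep) (r w : ℕ → ℝ)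
    (ν κ₀ D dStart dEnd : ℝ)
    (hν : 0 < ν) (hκ : 0 < κ₀) (hD : 0 < D) (hdS : 0 < dStart) (hdSE : dStart ≤ dEnd)
    (hw : ∀ t, 0 ≤ w t)
    (hr2 : ∀ t, r t ≤ 2)
    (hrmid : ∀ t ∈ Finset.Icc (tp + 1) (tp + Ep - 2),
      r t ≤ 2 * ν * Real.sqrt κ₀ * min (w t) 1)
    (hsumw : ∑ t ∈ Finset.Icc tp (tp + Ep - 2), min ((w t) ^ 2) 1
      ≤ 2 * Real.log (dEnd / dStart))
    (hlog : ((Ep : ℝ) - 1) * Real.log (dEnd / dStart) ≤ D) :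
    ∑ t ∈ Finset.Icc tp (tp + Ep - 1), r t ≤ 4 + 2 * ν * Real.sqrt (2 * κ₀ * D) := by
  obtain ⟨m, rfl⟩ : ∃ m, Ep = m + 2 := ⟨Ep - 2, by omega⟩
  have e1 : tp + (m + 2) - 1 = tp + m + 1 := by omega
  have e2 : tp + (m + 2) - 2 = tp + m := by omega
  rw [e1]
  rw [e2] at hrmid hsumw
  -- split the sum
  have hsplit : ∑ t ∈ Icc tp (tp + m + 1), r t
      = r tp + ∑ t ∈ Icc (tp + 1) (tp + m), r t + r (tp + m + 1) := by
    rw [Finset.sum_Icc_succ_top (by omega)]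
    congr 1
    rw [show tp + 1 = tp.succ from rfl, show Icc tp.succ (tp + m) = Ioc tp (tp + m) from Finset.Icc_add_one_left_eq_Ioc (a := tp) (b := tp + m),
      ← Finset.Ioc_insert_left (by omega : tp ≤ tp + m), Finset.sum_insert (by simp)]
  -- log is nonneg
  have hlog0 : 0 ≤ Real.log (dEnd / dStart) :=
    Real.log_nonneg ((one_le_div hdS).2 hdSE)
  -- S bound
  set S := ∑ t ∈ Icc (tp + 1) (tp + m), min (w t) 1 with hS
  have hS0 : 0 ≤ S := Finset.sum_nonneg fun t _ => le_min (hw t) one_pos.le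
  have hCS : S ^ 2 ≤ (m : ℝ) * ∑ t ∈ Icc (tp + 1) (tp + m), (min (w t) 1) ^ 2 := by
    have := sq_sum_le_card_mul_sum_sq (s := Icc (tp + 1) (tp + m))
      (f := fun t => min (w t) 1)
    simpa [Nat.card_Icc] using this
  have hmin : ∀ t, (min (w t) 1) ^ 2 = min ((w t) ^ 2) 1 := by
    intro t
    rcases le_total (w t) 1 with h | h
    · rw [min_eq_left h, min_eq_left (by nlinarith [hw t])]
    · rw [min_eq_right h, min_eq_right (by nlinarith), one_pow]
  have hsub : ∑ t ∈ Icc (tp + 1) (tp + m), (min (w t) 1) ^ 2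
      ≤ ∑ t ∈ Icc tp (tp + m), min ((w t) ^ 2) 1 := by
    simp_rw [hmin]
    exact Finset.sum_le_sum_of_subset_of_nonneg
      (Finset.Icc_subset_Icc_left (by omega))
      (fun t _ _ => le_min (sq_nonneg _) one_pos.le)
  have hS2 : S ^ 2 ≤ 2 * D := by
    have h1 : ((m : ℝ)) * ∑ t ∈ Icc tp (tp + m), min ((w t) ^ 2) 1
        ≤ ((m : ℝ) + 1) * (2 * Real.log (dEnd / dStart)) := by
      have hnn : 0 ≤ ∑ t ∈ Icc tp (tp + m), min ((w t) ^ 2) 1 :=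
        Finset.sum_nonneg fun t _ => le_min (sq_nonneg _) one_pos.le
      have := mul_le_mul_of_nonneg_left hsumw (by positivity : (0:ℝ) ≤ (m:ℝ))
      nlinarith [hsumw, hnn]
    have h2 : ((m : ℝ) + 1) * Real.log (dEnd / dStart) ≤ D := by
      have : ((tp + 0 + (m + 2) : ℕ) : ℝ) - (tp + 0 + 1 : ℕ) = (m : ℝ) + 1 := by
        push_cast; ring
      calc ((m : ℝ) + 1) * Real.log (dEnd / dStart)
          = (((m + 2 : ℕ) : ℝ) - 1) * Real.log (dEnd / dStart) := by push_cast; ring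
        _ ≤ D := hlog
    calc S ^ 2 ≤ (m : ℝ) * ∑ t ∈ Icc tp (tp + m), min ((w t) ^ 2) 1 := by
          refine hCS.trans (mul_le_mul_of_nonneg_left hsub (by positivity))
      _ ≤ ((m : ℝ) + 1) * (2 * Real.log (dEnd / dStart)) := h1
      _ ≤ 2 * D := by nlinarith
  have hSle : S ≤ Real.sqrt (2 * D) := Real.le_sqrt_of_sq_le hS2
  have hmid : ∑ t ∈ Icc (tp + 1) (tp + m), r t ≤ 2 * ν * Real.sqrt κ₀ * S := by
    rw [hS, Finset.mul_sum]
    exact Finset.sum_le_sum hrmid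
  have hsqrt : Real.sqrt κ₀ * Real.sqrt (2 * D) = Real.sqrt (2 * κ₀ * D) := by
    rw [← Real.sqrt_mul hκ.le]
    ring_nf
  have hfinal : 2 * ν * Real.sqrt κ₀ * S ≤ 2 * ν * Real.sqrt (2 * κ₀ * D) := by
    calc 2 * ν * Real.sqrt κ₀ * S ≤ 2 * ν * Real.sqrt κ₀ * Real.sqrt (2 * D) := by
          apply mul_le_mul_of_nonneg_left hSle (by positivity)
      _ = 2 * ν * Real.sqrt (2 * κ₀ * D) := by rw [mul_assoc, hsqrt]
  rw [hsplit]
  have := hr2 tp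
  have := hr2 (tp + m + 1)
  linarith
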